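/- If f : [a,b] → ℝ is twice differentiable with f'' absolutely continuous on [a,b], a < b, and M is a real number such that f'''(t) ≤ M for almost every t ∈ [a,b], then |∫_a^b f(t) dt − (b−a)/90 · (7f(a) + 32f((3a+b)/4) + 12f((a+b)/2) + 32f((a+3b)/4) + 7f(b))| ≤ (1/1620) · (M − (f''(b)−f''(a))/(b−a)) · (b−a)⁴. -/

import Mathlib

open MeasureTheory intervalIntegral Set Filter Topology Asymptotics

lemma bb5_integral_shifted_poly (c d p q r s : ℝ) :
    ∫ t in c..d, (p + q*(t - c) + r*(t - c)^2 + s*(t - c)^3)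
      = p*(d - c) + q*(d - c)^2/2 + r*(d - c)^3/3 + s*(d - c)^4/4 := by
  have H : ∀ t : ℝ, HasDerivAt
      (fun x => p*(x-c) + q*(x-c)^2/2 + (r*(x-c)^3/3 + s*(x-c)^4/4))
      (p + q*(t - c) + r*(t - c)^2 + s*(t - c)^3) t := by
    intro t
    have h1 : HasDerivAt (fun t : ℝ => t - c) 1 t := (hasDerivAt_id t).sub_const c
    have := ((h1.const_mul p).add (((h1.pow 2).const_mul q).div_const 2)).add
      ((((h1.pow 3).const_mul r).div_const 3).add ((((h1.pow 4)).const_mul s).div_const 4))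
    refine this.congr_deriv ?_
    push_cast
    ring
  rw [intervalIntegral.integral_eq_sub_of_hasDerivAt (fun t _ => H t)
    ((Continuous.intervalIntegrable (by continuity) _ _))]
  ring

lemma bb5_hpi {g : ℝ → ℝ} (hg : Integrable g) {P : ℝ → ℝ} (hP : Continuous P) (c d : ℝ) :
    IntervalIntegrable (fun t => P t * g t) volume c d :=
  (hg.intervalIntegrable).continuousOn_mul hP.continuousOn

lemma bb5_tail_bound {g : ℝ → ℝ} (hg : Integrable g) (x y : ℝ) (n : ℕ) :
    ‖∫ t in x..y, (y - t)^n * g t‖ ≤ |y - x|^n * abs (∫ t in x..y, |g t|) := by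
  have hb : ∀ᵐ t ∂volume.restrict (Set.uIoc x y), ‖(y - t)^n * g t‖ ≤ |y - x|^n * |g t| := by
    filter_upwards [MeasureTheory.ae_restrict_mem measurableSet_uIoc] with t ht
    have h3 : |y - t| ≤ |y - x| := by
      rcases le_total x y with h | h
      · rw [Set.uIoc_of_le h] at ht
        rw [abs_of_nonneg (by linarith [ht.2] : (0:ℝ) ≤ y - t),
            abs_of_nonneg (by linarith : (0:ℝ) ≤ y - x)]
        linarith [ht.1]
      · rw [Set.uIoc_of_ge h] at ht
        rw [abs_of_nonpos (by linarith [ht.1] : y - t ≤ 0),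
            abs_of_nonpos (by linarith : y - x ≤ 0)]
        linarith [ht.2]
    calc ‖(y - t)^n * g t‖ = |y - t|^n * |g t| := by
          rw [Real.norm_eq_abs, abs_mul, abs_pow]
      _ ≤ |y - x|^n * |g t| :=
          mul_le_mul_of_nonneg_right (pow_le_pow_left₀ (abs_nonneg _) h3 n) (abs_nonneg _)
  have := intervalIntegral.norm_integral_le_abs_of_norm_le hb
    ((hg.abs.intervalIntegrable).const_mul _)
  rwa [intervalIntegral.integral_const_mul, abs_mul,
    abs_of_nonneg (by positivity : (0:ℝ) ≤ |y-x|^n)] at this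

lemma bb5_tail_tendsto {g : ℝ → ℝ} (hg : Integrable g) (x : ℝ) :
    Filter.Tendsto (fun y => abs (∫ t in x..y, |g t|)) (nhds x) (nhds 0) := by
  have hA : Continuous (fun y => ∫ t in x..y, |g t|) :=
    intervalIntegral.continuous_primitive (fun c d => hg.abs.intervalIntegrable) x
  have h0 : (∫ t in x..x, |g t|) = 0 := intervalIntegral.integral_same
  have := hA.continuousAt (x := x)
  rw [ContinuousAt, h0] at this
  simpa using this.abs

lemma bb5_littleo {x : ℝ} {r φ : ℝ → ℝ} (hφ : Filter.Tendsto φ (nhds x) (nhds 0))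
    (hb : ∀ᶠ y in nhds x, ‖r y‖ ≤ |φ y| * |y - x|) :
    r =o[nhds x] fun y => y - x := by
  rw [Asymptotics.isLittleO_iff]
  intro c hc
  have h2 : ∀ᶠ y in nhds x, |φ y| < c := by
    have := Metric.tendsto_nhds.mp hφ c hc
    filter_upwards [this] with y hy
    simpa [Real.dist_eq] using hy
  filter_upwards [hb, h2] with y h1 h2'
  calc ‖r y‖ ≤ |φ y| * |y - x| := h1
    _ ≤ c * ‖y - x‖ := by
        rw [Real.norm_eq_abs]
        exact mul_le_mul_of_nonneg_right h2'.le (abs_nonneg _)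

lemma bb5_m1 {g : ℝ → ℝ} (hg : Integrable g) (a x : ℝ) :
    HasDerivAt (fun y => ∫ t in a..y, (y - t) * g t) (∫ t in a..x, g t) x := by
  rw [hasDerivAt_iff_isLittleO]
  have key : ∀ y : ℝ, (∫ t in a..y, (y - t) * g t) - (∫ t in a..x, (x - t) * g t)
      - (y - x) * (∫ t in a..x, g t) = ∫ t in x..y, (y - t)^1 * g t := by
    intro y
    have hsplit : (∫ t in a..x, (y - t) * g t) + (∫ t in x..y, (y - t) * g t)
        = ∫ t in a..y, (y - t) * g t :=
      intervalIntegral.integral_add_adjacent_intervals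
        (bb5_hpi hg (by continuity) a x) (bb5_hpi hg (by continuity) x y)
    have hexp : ∫ t in a..x, (y - t) * g t
        = (∫ t in a..x, (x - t) * g t) + (y - x) * ∫ t in a..x, g t := by
      rw [← intervalIntegral.integral_const_mul,
        ← intervalIntegral.integral_add (bb5_hpi hg (by continuity) a x)
          ((hg.intervalIntegrable).const_mul _)]
      exact intervalIntegral.integral_congr (fun t _ => by ring)
    simp only [pow_one]
    rw [← hsplit, hexp]
    ring
  have hO : (fun y => ∫ t in x..y, (y - t)^1 * g t) =o[nhds x] fun y => y - x := by
    apply bb5_littleo (bb5_tail_tendsto hg x)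
    filter_upwards with y
    calc ‖∫ t in x..y, (y - t)^1 * g t‖ ≤ |y - x|^1 * abs (∫ t in x..y, |g t|) :=
          bb5_tail_bound hg x y 1
      _ = |abs (∫ t in x..y, |g t|)| * |y - x| := by rw [abs_abs, pow_one, mul_comm]
  refine (Asymptotics.isLittleO_congr ?_ (Filter.Eventually.of_forall fun _ => rfl)).mpr hO
  filter_upwards with y
  rw [smul_eq_mul, key y]

lemma bb5_m2 {g : ℝ → ℝ} (hg : Integrable g) (a x : ℝ) :
    HasDerivAt (fun y => ∫ t in a..y, (y - t)^2 * g t)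
      (2 * ∫ t in a..x, (x - t) * g t) x := by
  rw [hasDerivAt_iff_isLittleO]
  have key : ∀ y : ℝ, (∫ t in a..y, (y - t)^2 * g t) - (∫ t in a..x, (x - t)^2 * g t)
      - (y - x) * (2 * ∫ t in a..x, (x - t) * g t)
      = (y - x)^2 * (∫ t in a..x, g t) + ∫ t in x..y, (y - t)^2 * g t := by
    intro y
    have hsplit : (∫ t in a..x, (y - t)^2 * g t) + (∫ t in x..y, (y - t)^2 * g t)
        = ∫ t in a..y, (y - t)^2 * g t :=
      intervalIntegral.integral_add_adjacent_intervals
        (bb5_hpi hg (by continuity) a x) (bb5_hpi hg (by continuity) x y)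
    have hexp : ∫ t in a..x, (y - t)^2 * g t
        = (∫ t in a..x, (x - t)^2 * g t) + ((2*(y - x)) * (∫ t in a..x, (x - t) * g t)
          + (y - x)^2 * ∫ t in a..x, g t) := by
      rw [← intervalIntegral.integral_const_mul (2*(y-x)),
        ← intervalIntegral.integral_const_mul ((y-x)^2),
        ← intervalIntegral.integral_add ((bb5_hpi hg (by continuity) a x).const_mul _)
          ((hg.intervalIntegrable).const_mul _),
        ← intervalIntegral.integral_add (bb5_hpi hg (by continuity) a x)
          ((((bb5_hpi hg (by continuity) a x).const_mul _)).add
            ((hg.intervalIntegrable).const_mul _))]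
      exact intervalIntegral.integral_congr (fun t _ => by ring)
    rw [← hsplit, hexp]
    ring
  have hO : (fun y => (y - x)^2 * (∫ t in a..x, g t) + ∫ t in x..y, (y - t)^2 * g t)
      =o[nhds x] fun y => y - x := by
    apply bb5_littleo (φ := fun y => |y - x| * (|∫ t in a..x, g t| + abs (∫ t in x..y, |g t|)))
    · have t1 : Filter.Tendsto (fun y : ℝ => |y - x|) (nhds x) (nhds 0) := by
        have hc : Continuous (fun y : ℝ => |y - x|) := (continuous_id.sub continuous_const).abs
        have := hc.tendsto x
        simpa using this
      have t2 := (tendsto_const_nhds (x := |∫ t in a..x, g t|) (f := nhds x)).add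
        (bb5_tail_tendsto hg x)
      simpa using t1.mul t2
    · filter_upwards with y
      have h1 := bb5_tail_bound hg x y 2
      have e1 : ‖(y - x)^2 * (∫ t in a..x, g t)‖ = |y - x|^2 * |∫ t in a..x, g t| := by
        rw [Real.norm_eq_abs, abs_mul, abs_pow]
      have hphi : |(|y - x| * (|∫ t in a..x, g t| + abs (∫ t in x..y, |g t|)))|
          = |y - x| * (|∫ t in a..x, g t| + abs (∫ t in x..y, |g t|)) :=
        abs_of_nonneg (by positivity)
      calc ‖(y - x)^2 * (∫ t in a..x, g t) + ∫ t in x..y, (y - t)^2 * g t‖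
          ≤ ‖(y - x)^2 * (∫ t in a..x, g t)‖ + ‖∫ t in x..y, (y - t)^2 * g t‖ :=
            norm_add_le _ _
        _ ≤ |y - x|^2 * |∫ t in a..x, g t| + |y - x|^2 * abs (∫ t in x..y, |g t|) := by
            rw [e1]; linarith
        _ ≤ _ := le_of_eq (by rw [hphi]; ring)
  refine (Asymptotics.isLittleO_congr ?_ (Filter.Eventually.of_forall fun _ => rfl)).mpr hO
  filter_upwards with y
  rw [smul_eq_mul, key y]

lemma bb5_m3 {g : ℝ → ℝ} (hg : Integrable g) (a x : ℝ) :
    HasDerivAt (fun y => ∫ t in a..y, (y - t)^3 * g t)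
      (3 * ∫ t in a..x, (x - t)^2 * g t) x := by
  rw [hasDerivAt_iff_isLittleO]
  have key : ∀ y : ℝ, (∫ t in a..y, (y - t)^3 * g t) - (∫ t in a..x, (x - t)^3 * g t)
      - (y - x) * (3 * ∫ t in a..x, (x - t)^2 * g t)
      = 3*(y - x)^2 * (∫ t in a..x, (x - t) * g t) + (y - x)^3 * (∫ t in a..x, g t)
        + ∫ t in x..y, (y - t)^3 * g t := by
    intro y
    have hsplit : (∫ t in a..x, (y - t)^3 * g t) + (∫ t in x..y, (y - t)^3 * g t)
        = ∫ t in a..y, (y - t)^3 * g t :=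
      intervalIntegral.integral_add_adjacent_intervals
        (bb5_hpi hg (by continuity) a x) (bb5_hpi hg (by continuity) x y)
    have hexp : ∫ t in a..x, (y - t)^3 * g t
        = (∫ t in a..x, (x - t)^3 * g t) + ((3*(y - x)) * (∫ t in a..x, (x - t)^2 * g t)
          + ((3*(y - x)^2) * (∫ t in a..x, (x - t) * g t)
            + (y - x)^3 * ∫ t in a..x, g t)) := by
      rw [← intervalIntegral.integral_const_mul (3*(y-x)),
        ← intervalIntegral.integral_const_mul (3*(y-x)^2),
        ← intervalIntegral.integral_const_mul ((y-x)^3),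
        ← intervalIntegral.integral_add ((bb5_hpi hg (by continuity) a x).const_mul _)
          ((hg.intervalIntegrable).const_mul _),
        ← intervalIntegral.integral_add ((bb5_hpi hg (by continuity) a x).const_mul _)
          ((((bb5_hpi hg (by continuity) a x).const_mul _)).add
            ((hg.intervalIntegrable).const_mul _)),
        ← intervalIntegral.integral_add (bb5_hpi hg (by continuity) a x)
          (((bb5_hpi hg (by continuity) a x).const_mul _).add
            ((((bb5_hpi hg (by continuity) a x).const_mul _)).add
              ((hg.intervalIntegrable).const_mul _)))]
      exact intervalIntegral.integral_congr (fun t _ => by ring)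
    rw [← hsplit, hexp]
    ring
  have hO : (fun y => 3*(y - x)^2 * (∫ t in a..x, (x - t) * g t)
        + (y - x)^3 * (∫ t in a..x, g t) + ∫ t in x..y, (y - t)^3 * g t)
      =o[nhds x] fun y => y - x := by
    apply bb5_littleo (φ := fun y => |y - x| * (3*|∫ t in a..x, (x - t) * g t|
      + |y - x| * |∫ t in a..x, g t| + |y - x| * abs (∫ t in x..y, |g t|)))
    · have t1 : Filter.Tendsto (fun y : ℝ => |y - x|) (nhds x) (nhds 0) := by
        have hc : Continuous (fun y : ℝ => |y - x|) := (continuous_id.sub continuous_const).abs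
        have := hc.tendsto x
        simpa using this
      have t2 := (tendsto_const_nhds (x := 3*|∫ t in a..x, (x - t) * g t|) (f := nhds x)).add
        ((t1.mul (tendsto_const_nhds (x := |∫ t in a..x, g t|))).add
          (t1.mul (bb5_tail_tendsto hg x)))
      have := t1.mul t2
      rw [show (0:ℝ) * (3*|∫ t in a..x, (x - t) * g t| + (0*|∫ t in a..x, g t| + 0*0)) = 0 by ring] at this
      exact this.congr (fun y => by ring)
    · filter_upwards with y
      have h1 := bb5_tail_bound hg x y 3
      have e1 : ‖3*(y - x)^2 * (∫ t in a..x, (x - t) * g t)‖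
          = 3 * |y - x|^2 * |∫ t in a..x, (x - t) * g t| := by
        rw [Real.norm_eq_abs, abs_mul, abs_mul, abs_pow]
        norm_num
      have e2 : ‖(y - x)^3 * (∫ t in a..x, g t)‖ = |y - x|^3 * |∫ t in a..x, g t| := by
        rw [Real.norm_eq_abs, abs_mul, abs_pow]
      have hphi : |(|y - x| * (3*|∫ t in a..x, (x - t) * g t|
          + |y - x| * |∫ t in a..x, g t| + |y - x| * abs (∫ t in x..y, |g t|)))|
          = |y - x| * (3*|∫ t in a..x, (x - t) * g t|
          + |y - x| * |∫ t in a..x, g t| + |y - x| * abs (∫ t in x..y, |g t|)) :=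
        abs_of_nonneg (by positivity)
      calc ‖3*(y - x)^2 * (∫ t in a..x, (x - t) * g t)
            + (y - x)^3 * (∫ t in a..x, g t) + ∫ t in x..y, (y - t)^3 * g t‖
          ≤ ‖3*(y - x)^2 * (∫ t in a..x, (x - t) * g t)
            + (y - x)^3 * (∫ t in a..x, g t)‖ + ‖∫ t in x..y, (y - t)^3 * g t‖ :=
            norm_add_le _ _
        _ ≤ ‖3*(y - x)^2 * (∫ t in a..x, (x - t) * g t)‖
            + ‖(y - x)^3 * (∫ t in a..x, g t)‖ + ‖∫ t in x..y, (y - t)^3 * g t‖ := by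
            linarith [norm_add_le (3*(y - x)^2 * (∫ t in a..x, (x - t) * g t))
              ((y - x)^3 * (∫ t in a..x, g t))]
        _ ≤ 3 * |y - x|^2 * |∫ t in a..x, (x - t) * g t| + |y - x|^3 * |∫ t in a..x, g t|
            + |y - x|^3 * abs (∫ t in x..y, |g t|) := by
            rw [e1, e2]; linarith
        _ ≤ _ := le_of_eq (by rw [hphi]; ring)
  refine (Asymptotics.isLittleO_congr ?_ (Filter.Eventually.of_forall fun _ => rfl)).mpr hO
  filter_upwards with y
  rw [smul_eq_mul, key y]

lemma bb5_exact (a b : ℝ) (hab : a < b) (f f' f'' g : ℝ → ℝ)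
    (hg : Integrable g)
    (hd : ∀ x ∈ Set.Icc a b, HasDerivAt f (f' x) x)
    (hd' : ∀ x ∈ Set.Icc a b, HasDerivAt f' (f'' x) x)
    (hf2 : ∀ x ∈ Set.Icc a b, f'' x = f'' a + ∫ t in a..x, g t) :
    (∫ t in a..b, f t) - (b-a)/90 * (7*f a + 32*f ((3*a+b)/4) + 12*f ((a+b)/2)
        + 32*f ((a+3*b)/4) + 7*f b)
    = (∫ t in (a)..((3*a+b)/4), ((b-t)^3/6 - (b-a)/180 * (32*((3*a+b)/4-t)^2
          + 12*((a+b)/2-t)^2 + 32*((a+3*b)/4-t)^2 + 7*(b-t)^2)) * g t)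
    + (∫ t in ((3*a+b)/4)..((a+b)/2), ((b-t)^3/6 - (b-a)/180 * (12*((a+b)/2-t)^2
          + 32*((a+3*b)/4-t)^2 + 7*(b-t)^2)) * g t)
    + (∫ t in ((a+b)/2)..((a+3*b)/4), ((b-t)^3/6 - (b-a)/180 * (32*((a+3*b)/4-t)^2
          + 7*(b-t)^2)) * g t)
    + (∫ t in ((a+3*b)/4)..(b), ((b-t)^3/6 - (b-a)/180 * (7*(b-t)^2)) * g t) := by
  set x1 : ℝ := (3*a+b)/4 with hx1def
  set x2 : ℝ := (a+b)/2 with hx2def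
  set x3 : ℝ := (a+3*b)/4 with hx3def
  have hx1m : x1 ∈ Set.Icc a b := ⟨by rw [hx1def]; linarith, by rw [hx1def]; linarith⟩
  have hx2m : x2 ∈ Set.Icc a b := ⟨by rw [hx2def]; linarith, by rw [hx2def]; linarith⟩
  have hx3m : x3 ∈ Set.Icc a b := ⟨by rw [hx3def]; linarith, by rw [hx3def]; linarith⟩
  have hbm : b ∈ Set.Icc a b := ⟨hab.le, le_rfl⟩
  set F0 : ℝ → ℝ := fun x => ∫ t in a..x, g t with hF0def
  have contF0 : Continuous F0 :=
    intervalIntegral.continuous_primitive (fun c d => hg.intervalIntegrable) a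
  set G1 : ℝ → ℝ := fun x => ∫ t in a..x, (x - t) * g t with hG1def
  set G2 : ℝ → ℝ := fun x => ∫ t in a..x, (x - t)^2 * g t with hG2def
  set G3 : ℝ → ℝ := fun x => ∫ t in a..x, (x - t)^3 * g t with hG3def
  have hG1d : ∀ x, HasDerivAt G1 (F0 x) x := fun x => bb5_m1 hg a x
  have hG2d : ∀ x, HasDerivAt G2 (2 * G1 x) x := fun x => bb5_m2 hg a x
  have hG3d : ∀ x, HasDerivAt G3 (3 * G2 x) x := fun x => bb5_m3 hg a x
  have contG1 : Continuous G1 :=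
    continuous_iff_continuousAt.mpr fun x => (hG1d x).continuousAt
  have contG2 : Continuous G2 :=
    continuous_iff_continuousAt.mpr fun x => (hG2d x).continuousAt
  have hG1a : G1 a = 0 := intervalIntegral.integral_same
  have hG2a : G2 a = 0 := intervalIntegral.integral_same
  have hG3a : G3 a = 0 := intervalIntegral.integral_same
  have hf''cont : ContinuousOn f'' (Set.Icc a b) :=
    ((continuous_const.add contF0).continuousOn).congr (fun x hx => hf2 x hx)
  -- step 1 : representation of f'
  have step1 : ∀ x ∈ Set.Icc a b, f' x = f' a + f'' a * (x - a) + G1 x := by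
    intro x hx
    have hsub : Set.uIcc a x ⊆ Set.Icc a b := by
      rw [Set.uIcc_of_le hx.1]
      exact Set.Icc_subset_Icc le_rfl hx.2
    have hftc : ∫ t in a..x, f'' t = f' x - f' a :=
      intervalIntegral.integral_eq_sub_of_hasDerivAt (fun t ht => hd' t (hsub ht))
        ((hf''cont.mono hsub).intervalIntegrable)
    have h2 : ∫ t in a..x, f'' t = f'' a * (x - a) + G1 x := by
      rw [intervalIntegral.integral_congr (g := fun t => f'' a + F0 t)
        (fun t ht => hf2 t (hsub ht))]
      rw [intervalIntegral.integral_add intervalIntegrable_const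
        (contF0.intervalIntegrable _ _)]
      have h3 : ∫ t in a..x, F0 t = G1 x - G1 a :=
        intervalIntegral.integral_eq_sub_of_hasDerivAt (fun t _ => hG1d t)
          (contF0.intervalIntegrable a x)
      rw [h3, hG1a, intervalIntegral.integral_const, smul_eq_mul]
      ring
    linarith
  -- step 2 : representation of f
  have step2 : ∀ x ∈ Set.Icc a b, f x = f a + f' a * (x - a) + f'' a * (x - a)^2/2
      + G2 x / 2 := by
    intro x hx
    have hsub : Set.uIcc a x ⊆ Set.Icc a b := by
      rw [Set.uIcc_of_le hx.1]
      exact Set.Icc_subset_Icc le_rfl hx.2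
    have hf'cont : ContinuousOn f' (Set.Icc a b) :=
      (((continuous_const.add (continuous_const.mul
        ((continuous_id).sub continuous_const))).add contG1).continuousOn).congr
        (fun y hy => step1 y hy)
    have hftc : ∫ t in a..x, f' t = f x - f a :=
      intervalIntegral.integral_eq_sub_of_hasDerivAt (fun t ht => hd t (hsub ht))
        ((hf'cont.mono hsub).intervalIntegrable)
    have h2 : ∫ t in a..x, f' t = f' a * (x - a) + f'' a * (x - a)^2/2 + G2 x / 2 := by
      rw [intervalIntegral.integral_congr
        (g := fun t => (f' a + f'' a * (t - a)) + G1 t) (fun t ht => step1 t (hsub ht))]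
      rw [intervalIntegral.integral_add
        ((by fun_prop : Continuous fun t : ℝ => f' a + f'' a * (t - a)).intervalIntegrable _ _)
        (contG1.intervalIntegrable _ _)]
      have h3 : ∫ t in a..x, G1 t = G2 x / 2 := by
        have h4 : ∀ t : ℝ, HasDerivAt (fun y => G2 y / 2) (G1 t) t := by
          intro t
          have := (hG2d t).div_const 2
          refine this.congr_deriv ?_
          ring
        rw [intervalIntegral.integral_eq_sub_of_hasDerivAt (fun t _ => h4 t)
          (contG1.intervalIntegrable a x), hG2a]
        ring
      have h5 : ∫ t in a..x, (f' a + f'' a * (t - a)) = f' a * (x - a) + f'' a * (x - a)^2/2 := by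
        have := bb5_integral_shifted_poly a x (f' a) (f'' a) 0 0
        rw [intervalIntegral.integral_congr
          (g := fun t => f' a + f'' a * (t - a) + 0*(t-a)^2 + 0*(t-a)^3)
          (fun t _ => by ring)]
        rw [this]
        ring
      rw [h3, h5]
    linarith
  -- step 3 : the integral of f
  have step3 : ∫ t in a..b, f t = f a * (b - a) + f' a * (b - a)^2/2
      + f'' a * (b - a)^3/6 + G3 b / 6 := by
    rw [intervalIntegral.integral_congr
      (g := fun x => f a + f' a * (x - a) + f'' a * (x - a)^2/2 + G2 x / 2)
      (fun x hx => step2 x (by rwa [Set.uIcc_of_le hab.le] at hx))]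
    rw [intervalIntegral.integral_add
      ((by fun_prop : Continuous fun x : ℝ =>
        f a + f' a * (x - a) + f'' a * (x - a)^2/2).intervalIntegrable _ _)
      ((contG2.div_const 2).intervalIntegrable _ _)]
    have h3 : ∫ x in a..b, G2 x / 2 = G3 b / 6 := by
      have h4 : ∀ t : ℝ, HasDerivAt (fun y => G3 y / 6) (G2 t / 2) t := by
        intro t
        have := (hG3d t).div_const 6
        refine this.congr_deriv ?_
        ring
      rw [intervalIntegral.integral_congr (g := fun x => G2 x / 2) (fun t _ => rfl),
        intervalIntegral.integral_eq_sub_of_hasDerivAt (fun t _ => h4 t)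
          ((contG2.div_const 2).intervalIntegrable a b), hG3a]
      ring
    have h5 : ∫ x in a..b, (f a + f' a * (x - a) + f'' a * (x - a)^2/2)
        = f a * (b - a) + f' a * (b - a)^2/2 + f'' a * (b - a)^3/6 := by
      have := bb5_integral_shifted_poly a b (f a) (f' a) (f'' a / 2) 0
      rw [intervalIntegral.integral_congr
        (g := fun t => f a + f' a * (t - a) + (f'' a / 2)*(t-a)^2 + 0*(t-a)^3)
        (fun t _ => by ring)]
      rw [this]
      ring
    rw [h3, h5]
  -- node values
  have e1 := step2 x1 hx1m
  have e2 := step2 x2 hx2m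
  have e3 := step2 x3 hx3m
  have eb := step2 b hbm
  -- piece integrability
  have ic : ∀ (z c d : ℝ), IntervalIntegrable (fun t => (z-t)^2 * g t) volume c d :=
    fun z c d => bb5_hpi hg (by fun_prop) c d
  have ic3 : ∀ c d : ℝ, IntervalIntegrable (fun t => (b-t)^3 * g t) volume c d :=
    fun c d => bb5_hpi hg (by fun_prop) c d
  -- linear expansion of kernel integrals
  have lin : ∀ (c d c1 c2 c3 c4 c5 : ℝ) (P : ℝ → ℝ),
      (∀ t, P t * g t = c1*((b-t)^3*g t) + (c2*((x1-t)^2*g t) + (c3*((x2-t)^2*g t)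
        + (c4*((x3-t)^2*g t) + c5*((b-t)^2*g t))))) →
      ∫ t in c..d, P t * g t = c1*(∫ t in c..d, (b-t)^3*g t)
        + (c2*(∫ t in c..d, (x1-t)^2*g t) + (c3*(∫ t in c..d, (x2-t)^2*g t)
        + (c4*(∫ t in c..d, (x3-t)^2*g t) + c5*(∫ t in c..d, (b-t)^2*g t)))) := by
    intro c d c1 c2 c3 c4 c5 P hP
    rw [← intervalIntegral.integral_const_mul, ← intervalIntegral.integral_const_mul,
      ← intervalIntegral.integral_const_mul, ← intervalIntegral.integral_const_mul,
      ← intervalIntegral.integral_const_mul,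
      ← intervalIntegral.integral_add ((ic x3 c d).const_mul c4) ((ic b c d).const_mul c5),
      ← intervalIntegral.integral_add ((ic x2 c d).const_mul c3)
        (((ic x3 c d).const_mul c4).add ((ic b c d).const_mul c5)),
      ← intervalIntegral.integral_add ((ic x1 c d).const_mul c2)
        (((ic x2 c d).const_mul c3).add
          (((ic x3 c d).const_mul c4).add ((ic b c d).const_mul c5))),
      ← intervalIntegral.integral_add ((ic3 c d).const_mul c1)
        (((ic x1 c d).const_mul c2).add (((ic x2 c d).const_mul c3).add
          (((ic x3 c d).const_mul c4).add ((ic b c d).const_mul c5))))]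
    exact intervalIntegral.integral_congr (fun t _ => hP t)
  have r1 : (∫ t in (a)..(x1), ((b-t)^3/6 - (b-a)/180 * (32*(x1-t)^2
        + 12*(x2-t)^2 + 32*(x3-t)^2 + 7*(b-t)^2)) * g t)
      = (1/6)*(∫ t in a..x1, (b-t)^3*g t)
        + ((-((b-a)*32/180))*(∫ t in a..x1, (x1-t)^2*g t)
        + ((-((b-a)*12/180))*(∫ t in a..x1, (x2-t)^2*g t)
        + ((-((b-a)*32/180))*(∫ t in a..x1, (x3-t)^2*g t)
        + (-((b-a)*7/180))*(∫ t in a..x1, (b-t)^2*g t)))) :=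
    lin a x1 _ _ _ _ _ _ (fun t => by ring)
  have r2 : (∫ t in (x1)..(x2), ((b-t)^3/6 - (b-a)/180 * (12*(x2-t)^2
        + 32*(x3-t)^2 + 7*(b-t)^2)) * g t)
      = (1/6)*(∫ t in x1..x2, (b-t)^3*g t)
        + ((0:ℝ)*(∫ t in x1..x2, (x1-t)^2*g t)
        + ((-((b-a)*12/180))*(∫ t in x1..x2, (x2-t)^2*g t)
        + ((-((b-a)*32/180))*(∫ t in x1..x2, (x3-t)^2*g t)
        + (-((b-a)*7/180))*(∫ t in x1..x2, (b-t)^2*g t)))) :=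
    lin x1 x2 _ _ _ _ _ _ (fun t => by ring)
  have r3 : (∫ t in (x2)..(x3), ((b-t)^3/6 - (b-a)/180 * (32*(x3-t)^2
        + 7*(b-t)^2)) * g t)
      = (1/6)*(∫ t in x2..x3, (b-t)^3*g t)
        + ((0:ℝ)*(∫ t in x2..x3, (x1-t)^2*g t)
        + ((0:ℝ)*(∫ t in x2..x3, (x2-t)^2*g t)
        + ((-((b-a)*32/180))*(∫ t in x2..x3, (x3-t)^2*g t)
        + (-((b-a)*7/180))*(∫ t in x2..x3, (b-t)^2*g t)))) :=
    lin x2 x3 _ _ _ _ _ _ (fun t => by ring)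
  have r4 : (∫ t in (x3)..(b), ((b-t)^3/6 - (b-a)/180 * (7*(b-t)^2)) * g t)
      = (1/6)*(∫ t in x3..b, (b-t)^3*g t)
        + ((0:ℝ)*(∫ t in x3..b, (x1-t)^2*g t)
        + ((0:ℝ)*(∫ t in x3..b, (x2-t)^2*g t)
        + ((0:ℝ)*(∫ t in x3..b, (x3-t)^2*g t)
        + (-((b-a)*7/180))*(∫ t in x3..b, (b-t)^2*g t)))) :=
    lin x3 b _ _ _ _ _ _ (fun t => by ring)
  -- splitting into pieces
  have h3b : (∫ t in a..b, (b-t)^3*g t) = (∫ t in a..x1, (b-t)^3*g t)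
      + (∫ t in x1..x2, (b-t)^3*g t) + (∫ t in x2..x3, (b-t)^3*g t)
      + (∫ t in x3..b, (b-t)^3*g t) := by
    have s1 := intervalIntegral.integral_add_adjacent_intervals (ic3 a x1) (ic3 x1 x2)
    have s2 := intervalIntegral.integral_add_adjacent_intervals (ic3 a x2) (ic3 x2 x3)
    have s3 := intervalIntegral.integral_add_adjacent_intervals (ic3 a x3) (ic3 x3 b)
    linarith
  have h2b : (∫ t in a..b, (b-t)^2*g t) = (∫ t in a..x1, (b-t)^2*g t)
      + (∫ t in x1..x2, (b-t)^2*g t) + (∫ t in x2..x3, (b-t)^2*g t)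
      + (∫ t in x3..b, (b-t)^2*g t) := by
    have s1 := intervalIntegral.integral_add_adjacent_intervals (ic b a x1) (ic b x1 x2)
    have s2 := intervalIntegral.integral_add_adjacent_intervals (ic b a x2) (ic b x2 x3)
    have s3 := intervalIntegral.integral_add_adjacent_intervals (ic b a x3) (ic b x3 b)
    linarith
  have h2x3 : (∫ t in a..x3, (x3-t)^2*g t) = (∫ t in a..x1, (x3-t)^2*g t)
      + (∫ t in x1..x2, (x3-t)^2*g t) + (∫ t in x2..x3, (x3-t)^2*g t) := by
    have s1 := intervalIntegral.integral_add_adjacent_intervals (ic x3 a x1) (ic x3 x1 x2)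
    have s2 := intervalIntegral.integral_add_adjacent_intervals (ic x3 a x2) (ic x3 x2 x3)
    linarith
  have h2x2 : (∫ t in a..x2, (x2-t)^2*g t) = (∫ t in a..x1, (x2-t)^2*g t)
      + (∫ t in x1..x2, (x2-t)^2*g t) := by
    have s1 := intervalIntegral.integral_add_adjacent_intervals (ic x2 a x1) (ic x2 x1 x2)
    linarith
  rw [step3, e1, e2, e3, eb, r1, r2, r3, r4]
  simp only [hG2def, hG3def]
  rw [h3b, h2b, h2x3, h2x2, hx1def, hx2def, hx3def]
  ring


lemma bb5_k1 (a b t : ℝ) (hab : a < b) (h1 : a ≤ t) (h2 : t ≤ (3*a+b)/4) :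
    |((b-t)^3/6 - (b-a)/180 * (32*((3*a+b)/4-t)^2 + 12*((a+b)/2-t)^2
      + 32*((a+3*b)/4-t)^2 + 7*(b-t)^2))| ≤ (b-a)^3/1620 := by
  have h1' : (0:ℝ) ≤ t - a := by linarith
  have hL : (0:ℝ) < b - a := by linarith
  rw [abs_le]
  constructor
  · nlinarith [sq_nonneg (t-a), sq_nonneg ((b-a) - 4*(t-a)), mul_nonneg h1' h1',
      sq_nonneg ((t-a) - (b-a)/4)]
  · nlinarith [mul_nonneg h1' (sq_nonneg (90*(t-a) - 21*(b-a))),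
      mul_nonneg hL.le (sq_nonneg (60*(t-a) - 7*(b-a)))]

lemma bb5_k2 (a b t : ℝ) (hab : a < b) (h1 : (3*a+b)/4 ≤ t) (h2 : t ≤ (a+b)/2) :
    |((b-t)^3/6 - (b-a)/180 * (12*((a+b)/2-t)^2
      + 32*((a+3*b)/4-t)^2 + 7*(b-t)^2))| ≤ (b-a)^3/1620 := by
  have h1' : (b-a) ≤ 4*(t-a) := by linarith
  have h2' : 4*(t-a) ≤ 2*(b-a) := by linarith
  have hL : (0:ℝ) < b - a := by linarith
  rw [abs_le]
  constructor
  · nlinarith [mul_nonneg (sq_nonneg (3*(t-a) - (b-a)))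
      (by linarith : (0:ℝ) ≤ 19*(b-a) - 30*(t-a))]
  · nlinarith [mul_nonneg (sq_nonneg (3*(t-a) - (b-a)))
      (by linarith : (0:ℝ) ≤ 19*(b-a) - 30*(t-a)), sq_nonneg (4*(t-a) - (b-a)),
      sq_nonneg (2*(t-a) - (b-a)),
      mul_nonneg (by linarith : (0:ℝ) ≤ 4*(t-a) - (b-a))
        (by linarith : (0:ℝ) ≤ 2*(b-a) - 4*(t-a))]

lemma bb5_k3 (a b t : ℝ) (hab : a < b) (h1 : (a+b)/2 ≤ t) (h2 : t ≤ (a+3*b)/4) :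
    |((b-t)^3/6 - (b-a)/180 * (32*((a+3*b)/4-t)^2 + 7*(b-t)^2))| ≤ (b-a)^3/1620 := by
  have h1' : 2*(b-a) ≤ 4*(t-a) := by linarith
  have h2' : 4*(t-a) ≤ 3*(b-a) := by linarith
  have hL : (0:ℝ) < b - a := by linarith
  rw [abs_le]
  constructor
  · nlinarith [mul_nonneg (sq_nonneg (3*(t-a) - 2*(b-a)))
      (by linarith : (0:ℝ) ≤ 30*(t-a) - 11*(b-a)), sq_nonneg (4*(t-a) - 3*(b-a)),
      mul_nonneg (by linarith : (0:ℝ) ≤ 4*(t-a) - 2*(b-a))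
        (by linarith : (0:ℝ) ≤ 3*(b-a) - 4*(t-a))]
  · nlinarith [mul_nonneg (sq_nonneg (3*(t-a) - 2*(b-a)))
      (by linarith : (0:ℝ) ≤ 30*(t-a) - 11*(b-a))]

lemma bb5_k4 (a b t : ℝ) (hab : a < b) (h1 : (a+3*b)/4 ≤ t) (h2 : t ≤ b) :
    |((b-t)^3/6 - (b-a)/180 * (7*(b-t)^2))| ≤ (b-a)^3/1620 := by
  have h1' : 3*(b-a) ≤ 4*(t-a) := by linarith
  have h2' : (t-a) ≤ (b-a) := by linarith
  have hL : (0:ℝ) < b - a := by linarith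
  rw [abs_le]
  constructor
  · nlinarith [mul_nonneg (by linarith : (0:ℝ) ≤ (b-a) - (t-a))
      (sq_nonneg (69*(b-a) - 90*(t-a))),
      mul_nonneg hL.le (sq_nonneg (53*(b-a) - 60*(t-a)))]
  · nlinarith [sq_nonneg ((b-a) - (t-a)),
      mul_nonneg (mul_nonneg (by linarith : (0:ℝ) ≤ (b-a) - (t-a))
        (by linarith : (0:ℝ) ≤ (b-a) - (t-a))) (by linarith : (0:ℝ) ≤ (b-a) - (t-a)),
      sq_nonneg (4*(t-a) - 3*(b-a)),
      mul_nonneg (by linarith : (0:ℝ) ≤ 4*(t-a) - 3*(b-a))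
        (by linarith : (0:ℝ) ≤ (b-a) - (t-a))]

set_option maxHeartbeats 1000000 in
theorem boole_bound_5 (a b M : ℝ) (hab : a < b) (f f' f'' f''' : ℝ → ℝ)
    (hderiv : ∀ x ∈ Set.Icc a b, HasDerivAt f (f' x) x)
    (hderiv' : ∀ x ∈ Set.Icc a b, HasDerivAt f' (f'' x) x)
    (hint : MeasureTheory.IntegrableOn f''' (Set.Icc a b))
    (hac : ∀ x ∈ Set.Icc a b, f'' x - f'' a = ∫ t in a..x, f''' t)
    (hbound : ∀ᵐ t, t ∈ Set.Icc a b → f''' t ≤ M) :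
    |(∫ t in a..b, f t) - (b - a)/90 * (7*f a + 32*f ((3*a+b)/4) + 12*f ((a+b)/2) + 32*f ((a+3*b)/4) + 7*f b)| ≤ (1/1620 * (M - (f'' b - f'' a)/(b - a))) * (b - a)^4 := by
  have h14 : a ≤ (3*a+b)/4 := by linarith
  have h24 : (3*a+b)/4 ≤ (a+b)/2 := by linarith
  have h34 : (a+b)/2 ≤ (a+3*b)/4 := by linarith
  have h44 : (a+3*b)/4 ≤ b := by linarith
  set g : ℝ → ℝ := (Set.Icc a b).indicator f''' with hgdef
  have hgI : Integrable g := hint.integrable_indicator measurableSet_Icc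
  have hgmem : ∀ t ∈ Set.Icc a b, g t = f''' t := fun t ht => Set.indicator_of_mem ht f'''
  have hf2 : ∀ x ∈ Set.Icc a b, f'' x = f'' a + ∫ t in a..x, g t := by
    intro x hx
    have h := hac x hx
    have hcong : ∫ t in a..x, g t = ∫ t in a..x, f''' t := by
      apply intervalIntegral.integral_congr
      intro t ht
      rw [Set.uIcc_of_le hx.1] at ht
      exact hgmem t ⟨ht.1, le_trans ht.2 hx.2⟩
    rw [hcong]
    linarith
  have E := bb5_exact a b hab f f' f'' g hgI hderiv hderiv' hf2
  -- the cubic comparison function: kernel integrals sum to zero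
  have hdc : ∀ x ∈ Set.Icc a b, HasDerivAt (fun t : ℝ => (t-a)^3/6) ((x-a)^2/2) x := by
    intro x _
    have h1 : HasDerivAt (fun t : ℝ => t - a) 1 x := (hasDerivAt_id x).sub_const a
    have := (h1.pow 3).div_const 6
    refine this.congr_deriv ?_
    push_cast
    ring
  have hdc' : ∀ x ∈ Set.Icc a b, HasDerivAt (fun t : ℝ => (t-a)^2/2) (x - a) x := by
    intro x _
    have h1 : HasDerivAt (fun t : ℝ => t - a) 1 x := (hasDerivAt_id x).sub_const a
    have := (h1.pow 2).div_const 2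
    refine this.congr_deriv ?_
    push_cast
    ring
  set g1 : ℝ → ℝ := (Set.Icc a b).indicator (fun _ => (1:ℝ)) with hg1def
  have hg1I : Integrable g1 :=
    ((integrableOn_const_iff).mpr (Or.inr measure_Icc_lt_top)).integrable_indicator measurableSet_Icc
  have hg1mem : ∀ t ∈ Set.Icc a b, g1 t = 1 :=
    fun t ht => Set.indicator_of_mem ht (fun _ => (1:ℝ))
  have hf2c : ∀ x ∈ Set.Icc a b, x - a = (a - a) + ∫ t in a..x, g1 t := by
    intro x hx
    have hcong : ∫ t in a..x, g1 t = ∫ t in a..x, (1:ℝ) := by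
      apply intervalIntegral.integral_congr
      intro t ht
      rw [Set.uIcc_of_le hx.1] at ht
      exact hg1mem t ⟨ht.1, le_trans ht.2 hx.2⟩
    rw [hcong]
    simp
  have E0 := bb5_exact a b hab (fun t : ℝ => (t-a)^3/6) (fun t : ℝ => (t-a)^2/2)
    (fun t : ℝ => t - a) g1 hg1I hdc hdc' hf2c
  have hcube : (∫ t in a..b, ((t-a)^3/6)) = (b-a)^4/24 := by
    rw [intervalIntegral.integral_congr
      (g := fun t => 0 + 0*(t-a) + 0*(t-a)^2 + (1/6)*(t-a)^3) (fun t _ => by ring),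
      bb5_integral_shifted_poly]
    ring
  rw [hcube] at E0
  -- convert g1-integrals to plain integrals
  have hz1 : (∫ t in (a)..((3*a+b)/4), ((b-t)^3/6 - (b-a)/180 * (32*((3*a+b)/4-t)^2
        + 12*((a+b)/2-t)^2 + 32*((a+3*b)/4-t)^2 + 7*(b-t)^2)) * g1 t)
      = ∫ t in (a)..((3*a+b)/4), ((b-t)^3/6 - (b-a)/180 * (32*((3*a+b)/4-t)^2
        + 12*((a+b)/2-t)^2 + 32*((a+3*b)/4-t)^2 + 7*(b-t)^2)) := by
    apply intervalIntegral.integral_congr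
    intro t ht
    rw [Set.uIcc_of_le h14] at ht
    simp only [hg1mem t ⟨ht.1, le_trans ht.2 (by linarith : (3*a+b)/4 ≤ b)⟩, mul_one]
  have hz2 : (∫ t in ((3*a+b)/4)..((a+b)/2), ((b-t)^3/6 - (b-a)/180 * (12*((a+b)/2-t)^2
        + 32*((a+3*b)/4-t)^2 + 7*(b-t)^2)) * g1 t)
      = ∫ t in ((3*a+b)/4)..((a+b)/2), ((b-t)^3/6 - (b-a)/180 * (12*((a+b)/2-t)^2
        + 32*((a+3*b)/4-t)^2 + 7*(b-t)^2)) := by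
    apply intervalIntegral.integral_congr
    intro t ht
    rw [Set.uIcc_of_le h24] at ht
    simp only [hg1mem t ⟨le_trans (by linarith) ht.1, le_trans ht.2 (by linarith)⟩, mul_one]
  have hz3 : (∫ t in ((a+b)/2)..((a+3*b)/4), ((b-t)^3/6 - (b-a)/180 * (32*((a+3*b)/4-t)^2
        + 7*(b-t)^2)) * g1 t)
      = ∫ t in ((a+b)/2)..((a+3*b)/4), ((b-t)^3/6 - (b-a)/180 * (32*((a+3*b)/4-t)^2
        + 7*(b-t)^2)) := by
    apply intervalIntegral.integral_congr
    intro t ht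
    rw [Set.uIcc_of_le h34] at ht
    simp only [hg1mem t ⟨le_trans (by linarith) ht.1, le_trans ht.2 (by linarith)⟩, mul_one]
  have hz4 : (∫ t in ((a+3*b)/4)..(b), ((b-t)^3/6 - (b-a)/180 * (7*(b-t)^2)) * g1 t)
      = ∫ t in ((a+3*b)/4)..(b), ((b-t)^3/6 - (b-a)/180 * (7*(b-t)^2)) := by
    apply intervalIntegral.integral_congr
    intro t ht
    rw [Set.uIcc_of_le h44] at ht
    simp only [hg1mem t ⟨le_trans (by linarith) ht.1, ht.2⟩, mul_one]
  rw [hz1, hz2, hz3, hz4] at E0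
  have hzero : (∫ t in (a)..((3*a+b)/4), ((b-t)^3/6 - (b-a)/180 * (32*((3*a+b)/4-t)^2
        + 12*((a+b)/2-t)^2 + 32*((a+3*b)/4-t)^2 + 7*(b-t)^2)))
      + (∫ t in ((3*a+b)/4)..((a+b)/2), ((b-t)^3/6 - (b-a)/180 * (12*((a+b)/2-t)^2
        + 32*((a+3*b)/4-t)^2 + 7*(b-t)^2)))
      + (∫ t in ((a+b)/2)..((a+3*b)/4), ((b-t)^3/6 - (b-a)/180 * (32*((a+3*b)/4-t)^2
        + 7*(b-t)^2)))
      + (∫ t in ((a+3*b)/4)..(b), ((b-t)^3/6 - (b-a)/180 * (7*(b-t)^2))) = 0 := by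
    have hpoly : (b-a)^4/24 - (b-a)/90 * (7*((a-a)^3/6) + 32*(((3*a+b)/4-a)^3/6)
        + 12*(((a+b)/2-a)^3/6) + 32*(((a+3*b)/4-a)^3/6) + 7*((b-a)^3/6)) = 0 := by ring
    linarith [E0]
  have hC : (0:ℝ) ≤ (b-a)^3/1620 := by
    apply div_nonneg _ (by norm_num)
    exact pow_nonneg (by linarith) 3
  have hsplitM : ∀ (c d : ℝ) (P : ℝ → ℝ), Continuous P →
      (∫ t in c..d, P t * g t) = (∫ t in c..d, P t * (g t - M)) + M * ∫ t in c..d, P t := by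
    intro c d P hP
    have h1 : (∫ t in c..d, P t * (g t - M)) = (∫ t in c..d, P t * g t) - M * ∫ t in c..d, P t := by
      rw [← intervalIntegral.integral_const_mul,
        ← intervalIntegral.integral_sub (bb5_hpi hgI hP c d)
          ((by fun_prop : Continuous fun t => M * P t).intervalIntegrable c d)]
      exact intervalIntegral.integral_congr (fun t _ => by ring)
    linarith
  have hest : ∀ (c d : ℝ) (P : ℝ → ℝ), a ≤ c → c ≤ d → d ≤ b → Continuous P →
      (∀ t, c ≤ t → t ≤ d → |P t| ≤ (b-a)^3/1620) →
      ‖∫ t in c..d, P t * (g t - M)‖ ≤ (b-a)^3/1620 * ∫ t in c..d, (M - g t) := by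
    intro c d P hac' hcd hdb hPc hK
    have hb : ∀ᵐ t ∂(volume.restrict (Set.uIoc c d)),
        ‖P t * (g t - M)‖ ≤ (b-a)^3/1620 * (M - g t) := by
      filter_upwards [MeasureTheory.ae_restrict_of_ae hbound,
        MeasureTheory.ae_restrict_mem measurableSet_uIoc] with t h1 h2
      rw [Set.uIoc_of_le hcd] at h2
      have htm : t ∈ Set.Icc a b := ⟨by linarith [h2.1], by linarith [h2.2]⟩
      have hgle : g t ≤ M := by rw [hgmem t htm]; exact h1 htm
      rw [Real.norm_eq_abs, abs_mul, abs_of_nonpos (by linarith : g t - M ≤ 0)]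
      have hKt := hK t (le_of_lt h2.1) h2.2
      have hnn : (0:ℝ) ≤ M - g t := by linarith
      calc |P t| * -(g t - M) = |P t| * (M - g t) := by ring
        _ ≤ (b-a)^3/1620 * (M - g t) := mul_le_mul_of_nonneg_right hKt hnn
    have h2 := intervalIntegral.norm_integral_le_abs_of_norm_le hb
      (((_root_.intervalIntegrable_const).sub hgI.intervalIntegrable).const_mul _)
    rw [intervalIntegral.integral_const_mul] at h2
    have hpos : (0:ℝ) ≤ ∫ t in c..d, (M - g t) := by
      apply intervalIntegral.integral_nonneg_of_ae_restrict hcd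
      filter_upwards [MeasureTheory.ae_restrict_of_ae hbound,
        MeasureTheory.ae_restrict_mem measurableSet_Icc] with t h1 h2'
      have htm : t ∈ Set.Icc a b := ⟨by linarith [h2'.1], by linarith [h2'.2]⟩
      have : g t ≤ M := by rw [hgmem t htm]; exact h1 htm
      simp only [Pi.zero_apply]
      linarith
    rwa [abs_mul, abs_of_nonneg hC, abs_of_nonneg hpos] at h2
  have bsp1 : (∫ t in (a)..((3*a+b)/4), ((b-t)^3/6 - (b-a)/180 * (32*((3*a+b)/4-t)^2 + 12*((a+b)/2-t)^2 + 32*((a+3*b)/4-t)^2 + 7*(b-t)^2)) * g t)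
      = (∫ t in (a)..((3*a+b)/4), ((b-t)^3/6 - (b-a)/180 * (32*((3*a+b)/4-t)^2 + 12*((a+b)/2-t)^2 + 32*((a+3*b)/4-t)^2 + 7*(b-t)^2)) * (g t - M)) + M * (∫ t in (a)..((3*a+b)/4), ((b-t)^3/6 - (b-a)/180 * (32*((3*a+b)/4-t)^2 + 12*((a+b)/2-t)^2 + 32*((a+3*b)/4-t)^2 + 7*(b-t)^2))) :=
    hsplitM (a) ((3*a+b)/4) _ (by fun_prop)
  have best1 : ‖∫ t in (a)..((3*a+b)/4), ((b-t)^3/6 - (b-a)/180 * (32*((3*a+b)/4-t)^2 + 12*((a+b)/2-t)^2 + 32*((a+3*b)/4-t)^2 + 7*(b-t)^2)) * (g t - M)‖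
      ≤ (b-a)^3/1620 * ∫ t in (a)..((3*a+b)/4), (M - g t) :=
    hest (a) ((3*a+b)/4) _ le_rfl h14 (by linarith : (3*a+b)/4 ≤ b) (by fun_prop) (fun t u v => bb5_k1 a b t hab u v)
  have bsp2 : (∫ t in ((3*a+b)/4)..((a+b)/2), ((b-t)^3/6 - (b-a)/180 * (12*((a+b)/2-t)^2 + 32*((a+3*b)/4-t)^2 + 7*(b-t)^2)) * g t)
      = (∫ t in ((3*a+b)/4)..((a+b)/2), ((b-t)^3/6 - (b-a)/180 * (12*((a+b)/2-t)^2 + 32*((a+3*b)/4-t)^2 + 7*(b-t)^2)) * (g t - M)) + M * (∫ t in ((3*a+b)/4)..((a+b)/2), ((b-t)^3/6 - (b-a)/180 * (12*((a+b)/2-t)^2 + 32*((a+3*b)/4-t)^2 + 7*(b-t)^2))) :=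
    hsplitM ((3*a+b)/4) ((a+b)/2) _ (by fun_prop)
  have best2 : ‖∫ t in ((3*a+b)/4)..((a+b)/2), ((b-t)^3/6 - (b-a)/180 * (12*((a+b)/2-t)^2 + 32*((a+3*b)/4-t)^2 + 7*(b-t)^2)) * (g t - M)‖
      ≤ (b-a)^3/1620 * ∫ t in ((3*a+b)/4)..((a+b)/2), (M - g t) :=
    hest ((3*a+b)/4) ((a+b)/2) _ h14 h24 (by linarith : (a+b)/2 ≤ b) (by fun_prop) (fun t u v => bb5_k2 a b t hab u v)
  have bsp3 : (∫ t in ((a+b)/2)..((a+3*b)/4), ((b-t)^3/6 - (b-a)/180 * (32*((a+3*b)/4-t)^2 + 7*(b-t)^2)) * g t)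
      = (∫ t in ((a+b)/2)..((a+3*b)/4), ((b-t)^3/6 - (b-a)/180 * (32*((a+3*b)/4-t)^2 + 7*(b-t)^2)) * (g t - M)) + M * (∫ t in ((a+b)/2)..((a+3*b)/4), ((b-t)^3/6 - (b-a)/180 * (32*((a+3*b)/4-t)^2 + 7*(b-t)^2))) :=
    hsplitM ((a+b)/2) ((a+3*b)/4) _ (by fun_prop)
  have best3 : ‖∫ t in ((a+b)/2)..((a+3*b)/4), ((b-t)^3/6 - (b-a)/180 * (32*((a+3*b)/4-t)^2 + 7*(b-t)^2)) * (g t - M)‖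
      ≤ (b-a)^3/1620 * ∫ t in ((a+b)/2)..((a+3*b)/4), (M - g t) :=
    hest ((a+b)/2) ((a+3*b)/4) _ (by linarith : a ≤ (a+b)/2) h34 h44 (by fun_prop) (fun t u v => bb5_k3 a b t hab u v)
  have bsp4 : (∫ t in ((a+3*b)/4)..(b), ((b-t)^3/6 - (b-a)/180 * (7*(b-t)^2)) * g t)
      = (∫ t in ((a+3*b)/4)..(b), ((b-t)^3/6 - (b-a)/180 * (7*(b-t)^2)) * (g t - M)) + M * (∫ t in ((a+3*b)/4)..(b), ((b-t)^3/6 - (b-a)/180 * (7*(b-t)^2))) :=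
    hsplitM ((a+3*b)/4) (b) _ (by fun_prop)
  have best4 : ‖∫ t in ((a+3*b)/4)..(b), ((b-t)^3/6 - (b-a)/180 * (7*(b-t)^2)) * (g t - M)‖
      ≤ (b-a)^3/1620 * ∫ t in ((a+3*b)/4)..(b), (M - g t) :=
    hest ((a+3*b)/4) (b) _ (by linarith : a ≤ (a+3*b)/4) h44 le_rfl (by fun_prop) (fun t u v => bb5_k4 a b t hab u v)
  have hWint : ∀ c d : ℝ, IntervalIntegrable (fun t => M - g t) volume c d :=
    fun c d => (_root_.intervalIntegrable_const).sub hgI.intervalIntegrable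
  have Wsum : (∫ t in (a)..((3*a+b)/4), (M - g t)) + (∫ t in ((3*a+b)/4)..((a+b)/2), (M - g t))
      + (∫ t in ((a+b)/2)..((a+3*b)/4), (M - g t)) + (∫ t in ((a+3*b)/4)..(b), (M - g t))
      = M*(b-a) - (f'' b - f'' a) := by
    have s1 := intervalIntegral.integral_add_adjacent_intervals
      (hWint a ((3*a+b)/4)) (hWint ((3*a+b)/4) ((a+b)/2))
    have s2 := intervalIntegral.integral_add_adjacent_intervals
      (hWint a ((a+b)/2)) (hWint ((a+b)/2) ((a+3*b)/4))
    have s3 := intervalIntegral.integral_add_adjacent_intervals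
      (hWint a ((a+3*b)/4)) (hWint ((a+3*b)/4) b)
    have hval : (∫ t in a..b, (M - g t)) = M*(b-a) - (f'' b - f'' a) := by
      rw [intervalIntegral.integral_sub _root_.intervalIntegrable_const hgI.intervalIntegrable,
        intervalIntegral.integral_const, smul_eq_mul]
      have := hf2 b ⟨hab.le, le_rfl⟩
      linarith
    linarith
  have Efinal : (∫ t in a..b, f t) - (b - a)/90 * (7*f a + 32*f ((3*a+b)/4)
      + 12*f ((a+b)/2) + 32*f ((a+3*b)/4) + 7*f b)
      = (∫ t in (a)..((3*a+b)/4), ((b-t)^3/6 - (b-a)/180 * (32*((3*a+b)/4-t)^2 + 12*((a+b)/2-t)^2 + 32*((a+3*b)/4-t)^2 + 7*(b-t)^2)) * (g t - M))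
      + (∫ t in ((3*a+b)/4)..((a+b)/2), ((b-t)^3/6 - (b-a)/180 * (12*((a+b)/2-t)^2 + 32*((a+3*b)/4-t)^2 + 7*(b-t)^2)) * (g t - M))
      + (∫ t in ((a+b)/2)..((a+3*b)/4), ((b-t)^3/6 - (b-a)/180 * (32*((a+3*b)/4-t)^2 + 7*(b-t)^2)) * (g t - M))
      + (∫ t in ((a+3*b)/4)..(b), ((b-t)^3/6 - (b-a)/180 * (7*(b-t)^2)) * (g t - M)) := by
    rw [E]
    linear_combination bsp1 + bsp2 + bsp3 + bsp4 + M * hzero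
  rw [Efinal]
  simp only [Real.norm_eq_abs] at best1 best2 best3 best4
  have habs : |(∫ t in (a)..((3*a+b)/4), ((b-t)^3/6 - (b-a)/180 * (32*((3*a+b)/4-t)^2 + 12*((a+b)/2-t)^2 + 32*((a+3*b)/4-t)^2 + 7*(b-t)^2)) * (g t - M))
      + (∫ t in ((3*a+b)/4)..((a+b)/2), ((b-t)^3/6 - (b-a)/180 * (12*((a+b)/2-t)^2 + 32*((a+3*b)/4-t)^2 + 7*(b-t)^2)) * (g t - M))
      + (∫ t in ((a+b)/2)..((a+3*b)/4), ((b-t)^3/6 - (b-a)/180 * (32*((a+3*b)/4-t)^2 + 7*(b-t)^2)) * (g t - M))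
      + (∫ t in ((a+3*b)/4)..(b), ((b-t)^3/6 - (b-a)/180 * (7*(b-t)^2)) * (g t - M))|
      ≤ (b-a)^3/1620 * (M*(b-a) - (f'' b - f'' a)) := by
    have t1 := abs_add_le ((∫ t in (a)..((3*a+b)/4), ((b-t)^3/6 - (b-a)/180 * (32*((3*a+b)/4-t)^2 + 12*((a+b)/2-t)^2 + 32*((a+3*b)/4-t)^2 + 7*(b-t)^2)) * (g t - M))
      + (∫ t in ((3*a+b)/4)..((a+b)/2), ((b-t)^3/6 - (b-a)/180 * (12*((a+b)/2-t)^2 + 32*((a+3*b)/4-t)^2 + 7*(b-t)^2)) * (g t - M))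
      + (∫ t in ((a+b)/2)..((a+3*b)/4), ((b-t)^3/6 - (b-a)/180 * (32*((a+3*b)/4-t)^2 + 7*(b-t)^2)) * (g t - M)))
      (∫ t in ((a+3*b)/4)..(b), ((b-t)^3/6 - (b-a)/180 * (7*(b-t)^2)) * (g t - M))
    have t2 := abs_add_le ((∫ t in (a)..((3*a+b)/4), ((b-t)^3/6 - (b-a)/180 * (32*((3*a+b)/4-t)^2 + 12*((a+b)/2-t)^2 + 32*((a+3*b)/4-t)^2 + 7*(b-t)^2)) * (g t - M))
      + (∫ t in ((3*a+b)/4)..((a+b)/2), ((b-t)^3/6 - (b-a)/180 * (12*((a+b)/2-t)^2 + 32*((a+3*b)/4-t)^2 + 7*(b-t)^2)) * (g t - M)))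
      (∫ t in ((a+b)/2)..((a+3*b)/4), ((b-t)^3/6 - (b-a)/180 * (32*((a+3*b)/4-t)^2 + 7*(b-t)^2)) * (g t - M))
    have t3 := abs_add_le (∫ t in (a)..((3*a+b)/4), ((b-t)^3/6 - (b-a)/180 * (32*((3*a+b)/4-t)^2 + 12*((a+b)/2-t)^2 + 32*((a+3*b)/4-t)^2 + 7*(b-t)^2)) * (g t - M))
      (∫ t in ((3*a+b)/4)..((a+b)/2), ((b-t)^3/6 - (b-a)/180 * (12*((a+b)/2-t)^2 + 32*((a+3*b)/4-t)^2 + 7*(b-t)^2)) * (g t - M))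
    nlinarith [Wsum, best1, best2, best3, best4, t1, t2, t3]
  refine le_trans habs (le_of_eq ?_)
  have hne : b - a ≠ 0 := by linarith
  field_simp
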